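/- Under the hypotheses of the noisy randomized Kaczmarz theorem, the squared-error bound 𝔼‖x*_k - x‖² ≤ (1 - 1/R)^k ‖x₀ - x‖² + R γ² holds, where γ = max_i |r_i|/‖a_i‖ and R = ‖A⁻¹‖² ‖A‖_F². -/

import Mathlib

open Finset

/-- Euclidean norm on `Fin k → ℝ`. -/
noncomputable def eucNorm {k : ℕ} (v : Fin k → ℝ) : ℝ := Real.sqrt (∑ j, v j ^ 2)

/-- Standard inner product on `Fin k → ℝ`. -/
noncomputable def ip {k : ℕ} (v w : Fin k → ℝ) : ℝ := ∑ j, v j * w j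

/-- Frobenius norm of a matrix. -/
noncomputable def frob {m n : ℕ} (A : Matrix (Fin m) (Fin n) ℝ) : ℝ :=
  Real.sqrt (∑ i, ∑ j, A i j ^ 2)

/-- `‖A⁻¹‖ = inf {M : M‖Az‖ ≥ ‖z‖ for all z}`. -/
noncomputable def invNorm {m n : ℕ} (A : Matrix (Fin m) (Fin n) ℝ) : ℝ :=
  sInf {M : ℝ | ∀ z : Fin n → ℝ, eucNorm z ≤ M * eucNorm (A.mulVec z)}

/-- Kaczmarz iteration driven by a list of row indices (head = last step):
each step orthogonally projects onto the hyperplane `{z : ⟨a_i, z⟩ = c i}`. -/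
noncomputable def kIter {m n : ℕ} (A : Matrix (Fin m) (Fin n) ℝ) (c : Fin m → ℝ)
    (x0 : Fin n → ℝ) : List (Fin m) → (Fin n → ℝ)
  | [] => x0
  | i :: l => kIter A c x0 l + ((c i - ip (A i) (kIter A c x0 l)) / eucNorm (A i) ^ 2) • A i

lemma enorm_nonneg' {k : ℕ} (v : Fin k → ℝ) : 0 ≤ eucNorm v := Real.sqrt_nonneg _

lemma enorm_sq {k : ℕ} (v : Fin k → ℝ) : eucNorm v ^ 2 = ∑ j, v j ^ 2 :=
  Real.sq_sqrt (Finset.sum_nonneg fun _ _ => sq_nonneg _)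

lemma frob_sq {m n : ℕ} (A : Matrix (Fin m) (Fin n) ℝ) : frob A ^ 2 = ∑ i, eucNorm (A i) ^ 2 := by
  rw [frob, Real.sq_sqrt (by positivity : (0:ℝ) ≤ ∑ i, ∑ j, A i j ^ 2)]
  exact Finset.sum_congr rfl fun i _ => (enorm_sq (A i)).symm

lemma enorm_sq_pos {k : ℕ} {v : Fin k → ℝ} (h : v ≠ 0) : 0 < eucNorm v ^ 2 := by
  rw [enorm_sq]
  obtain ⟨j, hj⟩ := Function.ne_iff.mp h
  exact Finset.sum_pos' (fun j _ => sq_nonneg _)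
    ⟨j, Finset.mem_univ j, pow_pos (abs_pos.mpr hj) 2 |>.trans_eq (sq_abs _)⟩

lemma enorm_eq_norm {k : ℕ} (v : EuclideanSpace ℝ (Fin k)) : ‖v‖ = eucNorm v := by
  rw [EuclideanSpace.norm_eq, eucNorm]
  congr 1; exact Finset.sum_congr rfl fun j _ => by rw [Real.norm_eq_abs, sq_abs]

lemma exists_bound {m n : ℕ} (A : Matrix (Fin m) (Fin n) ℝ) (hrank : A.rank = n) :
    ∃ M : ℝ, ∀ z : Fin n → ℝ, eucNorm z ≤ M * eucNorm (A.mulVec z) := by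
  let L : EuclideanSpace ℝ (Fin n) →ₗ[ℝ] EuclideanSpace ℝ (Fin m) :=
    { toFun := fun z => WithLp.toLp 2 (A.mulVec z)
      map_add' := fun u v => by ext; simp [Matrix.mulVec_add]
      map_smul' := fun c v => by ext; simp [Matrix.mulVec_smul] }
  have hker : LinearMap.ker L = ⊥ := by
    rw [LinearMap.ker_eq_bot]
    have h1 : Module.finrank ℝ (LinearMap.range A.mulVecLin) = n := hrank
    have h2 : Module.finrank ℝ (LinearMap.range A.mulVecLin)
        + Module.finrank ℝ (LinearMap.ker A.mulVecLin) = n := by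
      rw [LinearMap.finrank_range_add_finrank_ker]
      simp [Module.finrank_fintype_fun_eq_card]
    have h3 : LinearMap.ker A.mulVecLin = ⊥ := by
      have : Module.finrank ℝ (LinearMap.ker A.mulVecLin) = 0 := by omega
      exact Submodule.finrank_eq_zero.mp this
    have hinj : Function.Injective A.mulVec := by
      rw [← Matrix.coe_mulVecLin] at *
      exact LinearMap.ker_eq_bot.mp h3
    exact fun u v h => WithLp.ofLp_injective 2 (hinj (congrArg WithLp.ofLp h))
  obtain ⟨K, hK0, hK⟩ := L.exists_antilipschitzWith hker
  refine ⟨K, fun z => ?_⟩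
  have h := hK.le_mul_dist (WithLp.toLp 2 z) 0
  rw [map_zero, dist_zero_right, dist_zero_right, enorm_eq_norm, enorm_eq_norm] at h
  exact h

lemma invNorm_spec {m n : ℕ} (hn : 0 < n) (A : Matrix (Fin m) (Fin n) ℝ) (hrank : A.rank = n) :
    (∀ z : Fin n → ℝ, eucNorm z ≤ invNorm A * eucNorm (A.mulVec z)) ∧ 0 < invNorm A := by
  set S := {M : ℝ | ∀ z : Fin n → ℝ, eucNorm z ≤ M * eucNorm (A.mulVec z)} with hS
  obtain ⟨M₀, hM₀⟩ := exists_bound A hrank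
  have hne : S.Nonempty := ⟨M₀, hM₀⟩
  set i0 : Fin n := ⟨0, hn⟩
  set z₀ : Fin n → ℝ := fun j => if j = i0 then 1 else 0 with hz₀
  have hz1 : eucNorm z₀ = 1 := by
    rw [eucNorm]
    have : ∑ j, z₀ j ^ 2 = 1 := by rw [hz₀]; simp [ite_pow, Finset.sum_ite_eq']
    rw [this, Real.sqrt_one]
  have hc0 : 0 < eucNorm (A.mulVec z₀) := by
    rcases lt_or_eq_of_le (enorm_nonneg' (A.mulVec z₀)) with h | h
    · exact h
    · exfalso
      have := hM₀ z₀
      rw [hz1, ← h, mul_zero] at this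
      linarith
  have hlb : ∀ M ∈ S, (eucNorm (A.mulVec z₀))⁻¹ ≤ M := by
    intro M hM
    have h1 : 1 ≤ M * eucNorm (A.mulVec z₀) := by
      have := hM z₀; rwa [hz1] at this
    rw [inv_eq_one_div, div_le_iff₀ hc0]
    linarith
  have hbdd : BddBelow S := ⟨_, hlb⟩
  have hclosed : IsClosed S := by
    have : S = ⋂ z : Fin n → ℝ, {M : ℝ | eucNorm z ≤ M * eucNorm (A.mulVec z)} := by
      ext M; simp [hS, Set.mem_iInter]
    rw [this]
    exact isClosed_iInter fun z =>
      isClosed_le continuous_const (continuous_id.mul continuous_const)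
  have hmem : invNorm A ∈ S := hclosed.csInf_mem hne hbdd
  refine ⟨hmem, ?_⟩
  have : (eucNorm (A.mulVec z₀))⁻¹ ≤ invNorm A := le_csInf hne hlb
  have h2 : 0 < (eucNorm (A.mulVec z₀))⁻¹ := inv_pos.mpr hc0
  linarith

lemma step_eq {m n : ℕ} (A : Matrix (Fin m) (Fin n) ℝ) (i : Fin m) (hAi : A i ≠ 0)
    (x y : Fin n → ℝ) (b r : ℝ) (hb : ip (A i) x = b) :
    eucNorm (y + ((b + r - ip (A i) y) / eucNorm (A i) ^ 2) • A i - x) ^ 2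
      = eucNorm (y - x) ^ 2 + (r ^ 2 - ip (A i) (y - x) ^ 2) / eucNorm (A i) ^ 2 := by
  have hs0 : eucNorm (A i) ^ 2 ≠ 0 := ne_of_gt (enorm_sq_pos hAi)
  set s := eucNorm (A i) ^ 2 with hs
  have hd : ip (A i) (y - x) = ip (A i) y - b := by
    rw [← hb, ip, ip, ip, ← Finset.sum_sub_distrib]
    exact Finset.sum_congr rfl fun j _ => by simp [Pi.sub_apply]; ring
  set d := ip (A i) (y - x) with hdd
  set t := (b + r - ip (A i) y) / s with ht
  have ht' : t = (r - d) / s := by rw [ht, hd]; ring_nf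
  rw [enorm_sq, enorm_sq]
  have expand : ∀ j : Fin n, ((y + t • A i - x) j)^2
      = (y j - x j)^2 + 2*t*(A i j * (y j - x j)) + t^2 * (A i j)^2 := by
    intro j
    simp only [Pi.add_apply, Pi.sub_apply, Pi.smul_apply, smul_eq_mul]
    ring
  have hip : ∑ j, A i j * (y j - x j) = d := by
    rw [hdd, ip]; exact Finset.sum_congr rfl fun j _ => by simp [Pi.sub_apply]
  have hsum : ∑ j, (A i j)^2 = s := (enorm_sq (A i)).symm
  calc ∑ j, ((y + t • A i - x) j)^2
      = ∑ j, ((y j - x j)^2 + 2*t*(A i j * (y j - x j)) + t^2 * (A i j)^2) :=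
        Finset.sum_congr rfl fun j _ => expand j
    _ = (∑ j, (y j - x j)^2) + 2*t*(∑ j, A i j * (y j - x j)) + t^2 * ∑ j, (A i j)^2 := by
        rw [Finset.sum_add_distrib, Finset.sum_add_distrib, Finset.mul_sum, Finset.mul_sum]
    _ = (∑ j, (y j - x j)^2) + 2*t*d + t^2 * s := by rw [hip, hsum]
    _ = (∑ j, ((y - x) j)^2) + (r^2 - d^2)/s := by
        have h1 : (∑ j, (y j - x j)^2) = ∑ j, ((y - x) j)^2 :=
          Finset.sum_congr rfl fun j _ => by simp [Pi.sub_apply]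
        rw [h1]
        have : 2*t*d + t^2*s = (r^2 - d^2)/s := by rw [ht']; field_simp; ring
        linarith [this]

/-- Noisy randomized Kaczmarz: expected squared error after `k` steps. -/
theorem stmt_9 (m n : ℕ) (A : Matrix (Fin m) (Fin n) ℝ) (hrank : A.rank = n)
    (hrows : ∀ i, A i ≠ 0) (x x0 : Fin n → ℝ) (b r : Fin m → ℝ)
    (hb : ∀ i, ip (A i) x = b i) (k : ℕ) :
    ∑ f : Fin k → Fin m, (∏ j, eucNorm (A (f j)) ^ 2 / frob A ^ 2) *
        eucNorm (kIter A (fun i => b i + r i) x0 (List.ofFn f) - x) ^ 2 ≤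
      (1 - 1 / (invNorm A ^ 2 * frob A ^ 2)) ^ k * eucNorm (x0 - x) ^ 2 +
        (invNorm A ^ 2 * frob A ^ 2) * (⨆ i, |r i| / eucNorm (A i)) ^ 2 := by
  rcases Nat.eq_zero_or_pos n with hn | hn
  · -- degenerate case: n = 0, hence m = 0 and everything vanishes
    subst hn
    have hm : m = 0 := by
      by_contra hm
      exact hrows ⟨0, Nat.pos_of_ne_zero hm⟩ (funext fun j => j.elim0)
    subst hm
    have h0 : ∀ v : Fin 0 → ℝ, eucNorm v = 0 := fun v => by simp [eucNorm]
    have hf : frob A = 0 := by simp [frob]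
    simp [h0, hf]
  -- main case
  have hm : 0 < m := by
    have h := A.rank_le_card_height
    rw [Fintype.card_fin] at h
    omega
  obtain ⟨hspec, hIpos⟩ := invNorm_spec hn A hrank
  set F2 := frob A ^ 2 with hF2def
  have hF2 : F2 = ∑ i, eucNorm (A i) ^ 2 := frob_sq A
  have hF2pos : 0 < F2 := by
    rw [hF2]
    exact Finset.sum_pos (fun i _ => enorm_sq_pos (hrows i)) ⟨⟨0, hm⟩, Finset.mem_univ _⟩
  set I := invNorm A with hIdef
  set R := I ^ 2 * F2 with hRdef
  have hRpos : 0 < R := mul_pos (pow_pos hIpos 2) hF2pos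
  have hR1 : (1:ℝ) ≤ R := by
    set z₀ : Fin n → ℝ := fun j => if j = (⟨0, hn⟩ : Fin n) then 1 else 0 with hz₀
    have hz2 : ∑ j, z₀ j ^ 2 = 1 := by rw [hz₀]; simp [ite_pow, Finset.sum_ite_eq']
    have hz1 : eucNorm z₀ = 1 := by rw [eucNorm, hz2, Real.sqrt_one]
    have h1 : 1 ≤ I * eucNorm (A.mulVec z₀) := by have := hspec z₀; rwa [hz1] at this
    have h2 : eucNorm (A.mulVec z₀) ^ 2 ≤ F2 := by
      rw [enorm_sq, hF2]
      apply Finset.sum_le_sum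
      intro i _
      have hcs := Finset.sum_mul_sq_le_sq_mul_sq Finset.univ (A i) z₀
      rw [hz2, mul_one] at hcs
      calc (A.mulVec z₀ i)^2 = (∑ j, A i j * z₀ j)^2 := rfl
        _ ≤ ∑ j, A i j ^2 := hcs
        _ = eucNorm (A i)^2 := (enorm_sq (A i)).symm
    have h3 : (1:ℝ)^2 ≤ (I * eucNorm (A.mulVec z₀))^2 := pow_le_pow_left₀ one_pos.le h1 2
    rw [one_pow, mul_pow] at h3
    have h4 := mul_le_mul_of_nonneg_left h2 (sq_nonneg I)
    rw [hRdef]; linarith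
  set γ := ⨆ i, |r i| / eucNorm (A i) with hγdef
  have hAipos : ∀ i, 0 < eucNorm (A i) := fun i => by
    nlinarith [enorm_nonneg' (A i), enorm_sq_pos (hrows i)]
  have hγi : ∀ i, |r i| ≤ γ * eucNorm (A i) := by
    intro i
    have hle : |r i| / eucNorm (A i) ≤ γ :=
      le_ciSup (f := fun i => |r i| / eucNorm (A i)) (Set.Finite.bddAbove (Set.finite_range _)) i
    rwa [div_le_iff₀ (hAipos i)] at hle
  have hγ0 : 0 ≤ γ := by
    refine le_trans ?_ (le_ciSup (f := fun i => |r i| / eucNorm (A i))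
      (Set.Finite.bddAbove (Set.finite_range _)) (⟨0, hm⟩ : Fin m))
    exact div_nonneg (abs_nonneg _) (enorm_nonneg' _)
  -- the one-step inequality
  have stepB : ∀ y : Fin n → ℝ,
      ∑ i, (eucNorm (A i)^2 / F2)
          * eucNorm (y + ((b i + r i - ip (A i) y) / eucNorm (A i)^2) • A i - x)^2
        ≤ (1 - 1/R) * eucNorm (y - x)^2 + γ^2 := by
    intro y
    have hrw : ∀ i : Fin m, (eucNorm (A i)^2 / F2)
          * eucNorm (y + ((b i + r i - ip (A i) y) / eucNorm (A i)^2) • A i - x)^2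
        = (eucNorm (A i)^2 / F2) * eucNorm (y - x)^2
            + (r i ^2 - ip (A i) (y - x)^2) / F2 := by
      intro i
      rw [step_eq A i (hrows i) x y (b i) (r i) (hb i)]
      have hsi : eucNorm (A i)^2 ≠ 0 := ne_of_gt (enorm_sq_pos (hrows i))
      field_simp
      have he : eucNorm (A i) ≠ 0 := fun h => hsi (by rw [h]; ring)
      have h1 : eucNorm (A i)^2 * (eucNorm (A i))⁻¹^2 = 1 := by
        rw [← mul_pow, mul_inv_cancel₀ he, one_pow]
      linear_combination (r i ^2 - ip (A i) (y - x)^2) * h1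
    rw [Finset.sum_congr rfl fun i _ => hrw i, Finset.sum_add_distrib]
    have hA1 : ∑ i, (eucNorm (A i)^2 / F2) * eucNorm (y - x)^2 = eucNorm (y - x)^2 := by
      rw [← Finset.sum_mul, ← Finset.sum_div, ← hF2, div_self hF2pos.ne', one_mul]
    have hB1 : ∑ i, (r i^2 - ip (A i) (y-x)^2)/F2
        = (∑ i, r i^2)/F2 - (∑ i, ip (A i) (y-x)^2)/F2 := by
      rw [← Finset.sum_div, Finset.sum_sub_distrib, sub_div]
    rw [hA1, hB1]
    have hD : ∑ i, ip (A i) (y - x)^2 = eucNorm (A.mulVec (y - x))^2 := by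
      rw [enorm_sq]; rfl
    have hDE : eucNorm (y - x)^2 ≤ I^2 * eucNorm (A.mulVec (y-x))^2 := by
      have h := hspec (y - x)
      nlinarith [enorm_nonneg' (y-x), enorm_nonneg' (A.mulVec (y-x)), hIpos.le]
    have hgoal1 : eucNorm (y-x)^2 / R ≤ (∑ i, ip (A i) (y-x)^2) / F2 := by
      rw [hD, hRdef, div_le_div_iff₀ (mul_pos (pow_pos hIpos 2) hF2pos) hF2pos]
      nlinarith [mul_le_mul_of_nonneg_right hDE hF2pos.le]
    have hgoal2 : (∑ i, r i ^2)/F2 ≤ γ^2 := by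
      rw [div_le_iff₀ hF2pos]
      calc ∑ i, r i^2 ≤ ∑ i, γ^2 * eucNorm (A i)^2 := by
            apply Finset.sum_le_sum
            intro i _
            have h := pow_le_pow_left₀ (abs_nonneg (r i)) (hγi i) 2
            rw [sq_abs, mul_pow] at h
            exact h
        _ = γ^2 * F2 := by rw [← Finset.mul_sum, hF2]
    have hid : (1 - 1/R) * eucNorm (y-x)^2 = eucNorm (y-x)^2 - eucNorm (y-x)^2/R := by ring
    linarith
  -- normalization
  set c : Fin m → ℝ := fun i => b i + r i with hcdef
  have hw0 : ∀ i : Fin m, 0 ≤ eucNorm (A i)^2 / F2 := fun i => div_nonneg (sq_nonneg _) hF2pos.le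
  have wsum : ∑ i, eucNorm (A i)^2 / F2 = 1 := by
    rw [← Finset.sum_div, ← hF2, div_self hF2pos.ne']
  have mass : ∀ K : ℕ, ∑ g : Fin K → Fin m, ∏ j, eucNorm (A (g j))^2 / F2 = 1 := by
    intro K
    induction K with
    | zero => simp
    | succ K ih =>
      rw [← Equiv.sum_comp (Fin.consEquiv fun _ => Fin m)
            (fun g : Fin (K+1) → Fin m => ∏ j, eucNorm (A (g j))^2 / F2),
          Fintype.sum_prod_type]
      have hpr : ∀ (a : Fin m) (g : Fin K → Fin m),
          (∏ j, eucNorm (A ((Fin.consEquiv fun _ => Fin m) (a, g) j))^2 / F2)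
            = (eucNorm (A a)^2 / F2) * ∏ j, eucNorm (A (g j))^2 / F2 := by
        intro a g
        rw [show (Fin.consEquiv fun _ => Fin m) (a, g) = Fin.cons a g from rfl,
            Fin.prod_univ_succ]
        simp only [Fin.cons_zero, Fin.cons_succ]
      simp_rw [hpr]
      rw [← Finset.sum_mul_sum]
      rw [wsum, ih, one_mul]
  set E0 := eucNorm (x0 - x)^2 with hE0def
  set q := 1 - 1/R with hqdef
  have hq0 : 0 ≤ q := by
    rw [hqdef]
    have : 1/R ≤ 1 := by rw [div_le_one hRpos]; exact hR1
    linarith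
  have hqR : R * (1 - q) = 1 := by
    rw [hqdef]
    field_simp
    ring
  have key : ∀ K : ℕ, ∑ f : Fin K → Fin m, (∏ j, eucNorm (A (f j))^2 / F2)
        * eucNorm (kIter A c x0 (List.ofFn f) - x)^2
      ≤ q^K * E0 + (1 - q^K) * (R * γ^2) := by
    intro K
    induction K with
    | zero => simp [kIter, hE0def]
    | succ K ih =>
      rw [← Equiv.sum_comp (Fin.consEquiv fun _ => Fin m)
            (fun f : Fin (K+1) → Fin m => (∏ j, eucNorm (A (f j))^2 / F2)
              * eucNorm (kIter A c x0 (List.ofFn f) - x)^2),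
          Fintype.sum_prod_type]
      have hterm : ∀ (a : Fin m) (g : Fin K → Fin m),
          (∏ j, eucNorm (A ((Fin.consEquiv fun _ => Fin m) (a, g) j))^2 / F2)
            * eucNorm (kIter A c x0 (List.ofFn ((Fin.consEquiv fun _ => Fin m) (a, g))) - x)^2
          = (∏ j, eucNorm (A (g j))^2 / F2) * ((eucNorm (A a)^2 / F2) *
              eucNorm ((kIter A c x0 (List.ofFn g))
                + ((b a + r a - ip (A a) (kIter A c x0 (List.ofFn g))) / eucNorm (A a)^2) • A a
                - x)^2) := by
        intro a g
        rw [show (Fin.consEquiv fun _ => Fin m) (a, g) = Fin.cons a g from rfl]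
        have h2 : List.ofFn (Fin.cons a g) = a :: List.ofFn g := by
          rw [List.ofFn_succ]
          simp
        rw [h2, Fin.prod_univ_succ]
        simp only [Fin.cons_zero, Fin.cons_succ]
        have h3 : kIter A c x0 (a :: List.ofFn g)
            = kIter A c x0 (List.ofFn g)
              + ((b a + r a - ip (A a) (kIter A c x0 (List.ofFn g))) / eucNorm (A a)^2) • A a := by
          rw [kIter, hcdef]
        rw [h3]
        ring
      simp_rw [hterm]
      rw [Finset.sum_comm]
      have hfac : ∀ g : Fin K → Fin m,
          ∑ a, (∏ j, eucNorm (A (g j))^2 / F2) * ((eucNorm (A a)^2 / F2) *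
              eucNorm ((kIter A c x0 (List.ofFn g))
                + ((b a + r a - ip (A a) (kIter A c x0 (List.ofFn g))) / eucNorm (A a)^2) • A a
                - x)^2)
          = (∏ j, eucNorm (A (g j))^2 / F2) * ∑ a, (eucNorm (A a)^2 / F2) *
              eucNorm ((kIter A c x0 (List.ofFn g))
                + ((b a + r a - ip (A a) (kIter A c x0 (List.ofFn g))) / eucNorm (A a)^2) • A a
                - x)^2 := fun g => by rw [Finset.mul_sum]
      rw [Finset.sum_congr rfl fun g _ => hfac g]
      have hprodnn : ∀ g : Fin K → Fin m, 0 ≤ ∏ j, eucNorm (A (g j))^2 / F2 :=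
        fun g => Finset.prod_nonneg fun j _ => hw0 _
      calc ∑ g : Fin K → Fin m, (∏ j, eucNorm (A (g j))^2 / F2) * ∑ a, (eucNorm (A a)^2 / F2) *
              eucNorm ((kIter A c x0 (List.ofFn g))
                + ((b a + r a - ip (A a) (kIter A c x0 (List.ofFn g))) / eucNorm (A a)^2) • A a
                - x)^2
          ≤ ∑ g : Fin K → Fin m, (∏ j, eucNorm (A (g j))^2 / F2)
              * ((1 - 1/R) * eucNorm (kIter A c x0 (List.ofFn g) - x)^2 + γ^2) := by
            apply Finset.sum_le_sum
            intro g _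
            exact mul_le_mul_of_nonneg_left (stepB (kIter A c x0 (List.ofFn g))) (hprodnn g)
        _ = q * (∑ g : Fin K → Fin m, (∏ j, eucNorm (A (g j))^2 / F2)
              * eucNorm (kIter A c x0 (List.ofFn g) - x)^2)
            + γ^2 * ∑ g : Fin K → Fin m, (∏ j, eucNorm (A (g j))^2 / F2) := by
            rw [Finset.mul_sum, Finset.mul_sum, ← Finset.sum_add_distrib]
            refine Finset.sum_congr rfl fun g _ => ?_
            rw [hqdef]
            ring
        _ ≤ q * (q^K * E0 + (1 - q^K) * (R * γ^2)) + γ^2 * 1 := by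
            rw [mass K]
            exact add_le_add_left (mul_le_mul_of_nonneg_left ih hq0) _
        _ = q^(K+1) * E0 + (1 - q^(K+1)) * (R * γ^2) := by
            rw [pow_succ]
            linear_combination (-γ^2) * hqR
  have final := key k
  have last : q^k * E0 + (1 - q^k) * (R * γ^2) ≤ q^k * E0 + R * γ^2 := by
    have h1 : 0 ≤ q^k := pow_nonneg hq0 k
    nlinarith [mul_nonneg hRpos.le (sq_nonneg γ)]
  exact le_trans final last
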